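/- arXiv:1410.7857 — 2 statements merged into one kernel-verified Lean document; each statement's English description precedes it below -/
import Mathlib

section
/- Let V be an n-dimensional real vector space with basis (v₁, …, vₙ) and dual basis (v₁*, …, vₙ*). For every derivation D of ΛV there exist a unique linear map F : V → Λ₋V and an element η ∈ Λ₋V, unique up to adding an element of Λ₋V ∩ ΛⁿV, such that for all x ∈ ΛV: D(x) = Σ_{μ=1}^{n} F(v_μ) ∧ ι_{v_μ*}(x) + (1/2)(η ∧ x − x ∧ η). -/
/-- The degree-`k` homogeneous component `Λᵏ V` of the exterior algebra. -/
noncomputable def piece (V : Type*) [AddCommGroup V] [Module ℝ V] (k : ℕ) :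
    Submodule ℝ (ExteriorAlgebra ℝ V) :=
  (LinearMap.range (ExteriorAlgebra.ι ℝ : V →ₗ[ℝ] ExteriorAlgebra ℝ V)) ^ k

/-- The odd part `Λ₋V`. -/
noncomputable def oddPart (V : Type*) [AddCommGroup V] [Module ℝ V] :
    Submodule ℝ (ExteriorAlgebra ℝ V) :=
  ⨆ k : ℕ, piece V (2 * k + 1)

noncomputable def evenPart (V : Type*) [AddCommGroup V] [Module ℝ V] :
    Submodule ℝ (ExteriorAlgebra ℝ V) :=
  ⨆ k : ℕ, piece V (2 * k)

section Aux

variable {V : Type*} [AddCommGroup V] [Module ℝ V]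

local notation "E" => ExteriorAlgebra ℝ V
local notation "ιV" => (ExteriorAlgebra.ι ℝ : V →ₗ[ℝ] ExteriorAlgebra ℝ V)

lemma piece_eq (k : ℕ) : piece V k = (⋀[ℝ]^k V) := rfl

noncomputable instance instGA : GradedAlgebra (fun k => piece V k) :=
  ExteriorAlgebra.gradedAlgebra ℝ V

lemma ι_mem_piece_one (v : V) : ιV v ∈ piece V 1 := by
  rw [piece, pow_one]; exact ⟨v, rfl⟩

lemma mul_mem_piece {j k : ℕ} {x y : E} (hx : x ∈ piece V j) (hy : y ∈ piece V k) :
    x * y ∈ piece V (j + k) := by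
  rw [piece, pow_add]; exact Submodule.mul_mem_mul hx hy

lemma ι_mul_mem_piece {k : ℕ} {y : E} (v : V) (hy : y ∈ piece V k) :
    ιV v * y ∈ piece V (k + 1) := by
  simpa [Nat.add_comm] using mul_mem_piece (ι_mem_piece_one v) hy

lemma piece_le_odd (m : ℕ) : piece V (2 * m + 1) ≤ oddPart V :=
  le_iSup (fun k => piece V (2 * k + 1)) m

lemma piece_le_even (m : ℕ) : piece V (2 * m) ≤ evenPart V :=
  le_iSup (fun k => piece V (2 * k)) m

/-- supercommutation with a degree-one element -/
lemma comm_ι {k : ℕ} {y : E} (hy : y ∈ piece V k) (u : V) :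
    ιV u * y = ((-1 : ℝ) ^ k) • (y * ιV u) := by
  rw [piece] at hy
  induction hy using Submodule.pow_induction_on_left' with
  | algebraMap r =>
      rw [Algebra.algebraMap_eq_smul_one]
      simp [smul_comm]
  | add x y i hx hy ihx ihy =>
      rw [mul_add, ihx, ihy, add_mul, smul_add]
  | mem_mul m hm i z hz ih =>
      obtain ⟨w, rfl⟩ := hm
      have hswap : ιV u * ιV w = -(ιV w * ιV u) :=
        eq_neg_of_add_eq_zero_left (ExteriorAlgebra.ι_add_mul_swap (R := ℝ) u w)
      calc ιV u * (ιV w * z) = (ιV u * ιV w) * z := by rw [mul_assoc]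
        _ = -(ιV w * (ιV u * z)) := by rw [hswap]; rw [neg_mul, mul_assoc]
        _ = -(ιV w * (((-1 : ℝ) ^ i) • (z * ιV u))) := by rw [ih]
        _ = ((-1 : ℝ) ^ (i + 1)) • (ιV w * z * ιV u) := by
              rw [mul_smul_comm, pow_succ]
              rw [← neg_smul]
              ring_nf
              rw [mul_assoc]

/-- full supercommutativity -/
lemma supercomm {j k : ℕ} {x y : E} (hx : x ∈ piece V j) (hy : y ∈ piece V k) :
    x * y = ((-1 : ℝ) ^ (j * k)) • (y * x) := by
  rw [piece] at hx
  induction hx using Submodule.pow_induction_on_left' with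
  | algebraMap r =>
      rw [Algebra.algebraMap_eq_smul_one]
      simp [smul_comm]
  | add x x' i hx hx' ihx ihx' =>
      rw [add_mul, ihx, ihx', mul_add, smul_add]
  | mem_mul m hm i z hz ih =>
      obtain ⟨w, rfl⟩ := hm
      calc ιV w * z * y = ιV w * (((-1 : ℝ) ^ (i * k)) • (y * z)) := by
              rw [mul_assoc, ih]
        _ = ((-1 : ℝ) ^ (i * k)) • (ιV w * y * z) := by
              rw [mul_smul_comm, mul_assoc]
        _ = ((-1 : ℝ) ^ (i * k)) • ((((-1 : ℝ) ^ k) • (y * ιV w)) * z) := by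
              rw [comm_ι hy w]
        _ = ((-1 : ℝ) ^ ((i + 1) * k)) • (y * (ιV w * z)) := by
              rw [smul_mul_assoc, smul_smul, ← pow_add, mul_assoc]
              ring_nf

lemma odd_comm {k : ℕ} {w x : E} (hw : w ∈ oddPart V) (hx : x ∈ piece V k) :
    w * x = ((-1 : ℝ) ^ k) • (x * w) := by
  rw [oddPart] at hw
  refine Submodule.iSup_induction (motive := fun w => w * x = ((-1 : ℝ) ^ k) • (x * w)) _ hw
    (fun m w hw => ?_) (by simp) (fun w w' ihw ihw' => by
      beta_reduce at ihw ihw' ⊢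
      rw [add_mul, ihw, ihw', mul_add, smul_add])
  beta_reduce
  rw [supercomm hw hx, pow_mul, Odd.neg_one_pow ⟨m, by ring⟩]

lemma even_comm {k : ℕ} {w x : E} (hw : w ∈ evenPart V) (hx : x ∈ piece V k) :
    w * x = x * w := by
  rw [evenPart] at hw
  refine Submodule.iSup_induction (motive := fun w => w * x = x * w) _ hw
    (fun m w hw => ?_) (by simp) (fun w w' ihw ihw' => by
      beta_reduce at ihw ihw' ⊢
      rw [add_mul, ihw, ihw', mul_add])
  beta_reduce
  rw [supercomm hw hx, pow_mul, Even.neg_one_pow ⟨m, by ring⟩, one_pow, one_smul]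

/-- scaling operator: multiplies the degree-`k` component by `f k`. -/
noncomputable def scaleOp (f : ℕ → ℝ) : E →ₗ[ℝ] E :=
  (DirectSum.toModule ℝ ℕ E (fun k => f k • (piece V k).subtype)) ∘ₗ
    (DirectSum.decomposeLinearEquiv (fun k => piece V k)).toLinearMap

lemma scaleOp_of_mem (f : ℕ → ℝ) {k : ℕ} {x : E} (hx : x ∈ piece V k) :
    scaleOp f x = f k • x := by
  rw [scaleOp]
  simp only [LinearMap.comp_apply, LinearEquiv.coe_coe,
    DirectSum.decomposeLinearEquiv_apply]
  rw [DirectSum.decompose_of_mem _ hx, ← DirectSum.lof_eq_of ℝ, DirectSum.toModule_lof]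
  rfl

lemma scaleOp_mem_piece (f : ℕ → ℝ) {k : ℕ} {x : E} (hx : x ∈ piece V k) :
    scaleOp f x ∈ piece V k := by
  rw [scaleOp_of_mem f hx]; exact Submodule.smul_mem _ _ hx

lemma scaleOp_mem_odd (f : ℕ → ℝ) {x : E} (hx : x ∈ oddPart V) :
    scaleOp f x ∈ oddPart V := by
  rw [oddPart] at hx
  refine Submodule.iSup_induction (motive := fun w => scaleOp f w ∈ oddPart V) _ hx
    (fun m w hw => ?_) (by simp) (fun w w' ihw ihw' => by
      beta_reduce at ihw ihw' ⊢
      rw [map_add]; exact add_mem ihw ihw')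
  beta_reduce
  exact piece_le_odd m (scaleOp_mem_piece f hw)

lemma scaleOp_homog (x : E) {p : E → Prop} (h0 : p 0)
    (hhom : ∀ (k : ℕ) (y : E), y ∈ piece V k → p y)
    (hadd : ∀ y z : E, p y → p z → p (y + z)) : p x := by
  refine DirectSum.Decomposition.inductionOn (fun k => piece V k) h0 ?_ hadd x
  intro i m
  exact hhom i m m.2

lemma scaleOp_scaleOp (f g : ℕ → ℝ) (x : E) :
    scaleOp f (scaleOp g x) = scaleOp (fun k => f k * g k) x := by
  refine scaleOp_homog (p := fun y =>
    scaleOp f (scaleOp g y) = scaleOp (fun k => f k * g k) y) x ?_ ?_ ?_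
  · simp
  · intro k y hy
    rw [scaleOp_of_mem g hy, map_smul, scaleOp_of_mem f hy, scaleOp_of_mem _ hy,
      smul_smul, mul_comm]
  · intro y z ihy ihz
    rw [map_add, map_add, map_add, ihy, ihz]

noncomputable def oddPr : E →ₗ[ℝ] E := scaleOp (fun k => if Odd k then 1 else 0)
noncomputable def evPr : E →ₗ[ℝ] E := scaleOp (fun k => if Odd k then 0 else 1)

lemma oddPr_add_evPr (x : E) : oddPr x + evPr x = x := by
  refine scaleOp_homog (p := fun y => oddPr y + evPr y = y) x (by simp) ?_ ?_
  · intro k y hy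
    rw [oddPr, evPr, scaleOp_of_mem _ hy, scaleOp_of_mem _ hy]
    by_cases h : Odd k <;> simp [h]
  · intro y z ihy ihz
    rw [map_add, map_add]
    rw [add_add_add_comm, ihy, ihz]

lemma oddPr_mem (x : E) : oddPr x ∈ oddPart V := by
  refine scaleOp_homog (p := fun y => oddPr y ∈ oddPart V) x (by simp) ?_ ?_
  · intro k y hy
    rw [oddPr, scaleOp_of_mem _ hy]
    by_cases h : Odd k
    · obtain ⟨m, rfl⟩ := h
      rw [if_pos ⟨m, rfl⟩]
      exact Submodule.smul_mem _ _ (piece_le_odd m hy)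
    · simp [h]
  · intro y z ihy ihz
    rw [map_add]; exact add_mem ihy ihz

lemma evPr_mem (x : E) : evPr x ∈ evenPart V := by
  refine scaleOp_homog (p := fun y => evPr y ∈ evenPart V) x (by simp) ?_ ?_
  · intro k y hy
    rw [evPr, scaleOp_of_mem _ hy]
    by_cases h : Odd k
    · simp [h]
    · obtain ⟨m, rfl⟩ := Nat.not_odd_iff_even.mp h
      simp only [h, if_neg, not_false_iff, one_smul]
      refine piece_le_even m ?_
      convert hy using 2
      try ring
  · intro y z ihy ihz
    rw [map_add]; exact add_mem ihy ihz

lemma oddPr_of_odd {x : E} (hx : x ∈ oddPart V) : oddPr x = x := by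
  rw [oddPart] at hx
  refine Submodule.iSup_induction (motive := fun w => oddPr w = w) _ hx
    (fun m w hw => ?_) (by simp) (fun w w' ihw ihw' => by
      beta_reduce at ihw ihw' ⊢
      rw [map_add, ihw, ihw'])
  beta_reduce
  rw [oddPr, scaleOp_of_mem _ hw]
  simp [Nat.odd_iff]

lemma evPr_of_odd {x : E} (hx : x ∈ oddPart V) : evPr x = 0 := by
  have h := oddPr_add_evPr x
  rw [oddPr_of_odd hx] at h
  exact add_eq_left.mp h

lemma oddPr_of_even {x : E} (hx : x ∈ evenPart V) : oddPr x = 0 := by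
  rw [evenPart] at hx
  refine Submodule.iSup_induction (motive := fun w => oddPr w = 0) _ hx
    (fun m w hw => ?_) (by simp) (fun w w' ihw ihw' => by
      beta_reduce at ihw ihw' ⊢
      rw [map_add, ihw, ihw', add_zero])
  beta_reduce
  rw [oddPr, scaleOp_of_mem _ hw]
  simp [Nat.odd_iff, Nat.mul_mod_right]

lemma odd_mul_ι_mem_even {w : E} (hw : w ∈ oddPart V) (v : V) :
    w * ιV v ∈ evenPart V := by
  rw [oddPart] at hw
  refine Submodule.iSup_induction (motive := fun w => w * ιV v ∈ evenPart V) _ hw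
    (fun m w hw => ?_) (by simp) (fun w w' ihw ihw' => by
      beta_reduce at ihw ihw' ⊢
      rw [add_mul]; exact add_mem ihw ihw')
  beta_reduce
  refine piece_le_even (m + 1) ?_
  have := mul_mem_piece hw (ι_mem_piece_one v)
  convert this using 2
  ring

section WithC

variable (c : Module.Dual ℝ V → ExteriorAlgebra ℝ V →ₗ[ℝ] ExteriorAlgebra ℝ V)
    (hc1 : ∀ α, c α 1 = 0)
    (hc2 : ∀ α (v : V), c α (ExteriorAlgebra.ι ℝ v) = algebraMap ℝ _ (α v))
    (hc3 : ∀ α (k : ℕ) (x y : ExteriorAlgebra ℝ V), x ∈ piece V k →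
      c α (x * y) = c α x * y + ((-1 : ℝ) ^ k) • (x * c α y))

include hc1 hc2 hc3

lemma c_mem_low (α : Module.Dual ℝ V) {k : ℕ} {x : E} (hx : x ∈ piece V k) :
    c α x ∈ (match k with | 0 => (⊥ : Submodule ℝ E) | (j+1) => piece V j) := by
  rw [piece] at hx
  induction hx using Submodule.pow_induction_on_left' with
  | algebraMap r =>
      rw [Algebra.algebraMap_eq_smul_one, map_smul, hc1 α, smul_zero]
      exact Submodule.zero_mem _
  | add x y i hx hy ihx ihy =>
      rw [map_add]; exact add_mem ihx ihy
  | mem_mul m hm i z hz ih =>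
      obtain ⟨u, rfl⟩ := hm
      have h1 : c α (ιV u) * z = (α u) • z := by
        rw [hc2, Algebra.smul_def]
      have hz' : z ∈ piece V i := hz
      have hmem2 : ιV u * c α z ∈ piece V i := by
        cases i with
        | zero =>
            have h0 : c α z = 0 := Submodule.mem_bot ℝ |>.mp ih
            rw [h0, mul_zero]; exact Submodule.zero_mem _
        | succ j => exact ι_mul_mem_piece u ih
      rw [hc3 α 1 (ιV u) z (ι_mem_piece_one u), h1]
      show (α u) • z + ((-1:ℝ)^1) • (ιV u * c α z) ∈ piece V i
      exact add_mem (Submodule.smul_mem _ _ hz') (Submodule.smul_mem _ _ hmem2)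

/-- contraction lowers degree by one -/
lemma c_mem_piece (α : Module.Dual ℝ V) {k : ℕ} {x : E} (hx : x ∈ piece V (k + 1)) :
    c α x ∈ piece V k :=
  c_mem_low c hc1 hc2 hc3 α hx

lemma c_piece_zero (α : Module.Dual ℝ V) {x : E} (hx : x ∈ piece V 0) :
    c α x = 0 :=
  Submodule.mem_bot ℝ |>.mp (c_mem_low c hc1 hc2 hc3 α hx)

lemma c_even_mem_odd (α : Module.Dual ℝ V) {x : E} (hx : x ∈ evenPart V) :
    c α x ∈ oddPart V := by
  rw [evenPart] at hx
  refine Submodule.iSup_induction (motive := fun w => c α w ∈ oddPart V) _ hx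
    (fun m w hw => ?_) (by simp) (fun w w' ihw ihw' => by
      beta_reduce at ihw ihw' ⊢
      rw [map_add]; exact add_mem ihw ihw')
  beta_reduce
  cases m with
  | zero =>
      rw [c_piece_zero c hc1 hc2 hc3 α (by simpa using hw)]
      exact Submodule.zero_mem _
  | succ j =>
      refine piece_le_odd j (c_mem_piece c hc1 hc2 hc3 α ?_)
      convert hw using 2
      ring

/-- Leibniz for contraction against an even first factor -/
lemma c_even_leibniz (α : Module.Dual ℝ V) {x : E} (hx : x ∈ evenPart V) (y : E) :
    c α (x * y) = c α x * y + x * c α y := by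
  rw [evenPart] at hx
  refine Submodule.iSup_induction
    (motive := fun w => c α (w * y) = c α w * y + w * c α y) _ hx
    (fun m w hw => ?_) (by simp) (fun w w' ihw ihw' => by
      beta_reduce at ihw ihw' ⊢
      rw [add_mul, map_add, ihw, ihw', map_add, add_mul, add_mul]
      abel)
  beta_reduce
  rw [hc3 α (2 * m) w y hw]
  rw [pow_mul]
  norm_num

/-- left multiplication by an odd element composed with contraction is a derivation -/
lemma odd_mul_c_leibniz (α : Module.Dual ℝ V) {w : E} (hw : w ∈ oddPart V)
    (x y : E) : w * c α (x * y) = (w * c α x) * y + x * (w * c α y) := by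
  refine scaleOp_homog (p := fun x =>
    w * c α (x * y) = (w * c α x) * y + x * (w * c α y)) x ?_ ?_ ?_
  · simp
  · intro k x hx
    rw [hc3 α k x y hx, mul_add, mul_smul_comm]
    congr 1
    · rw [mul_assoc]
    · have hcomm : w * x = ((-1 : ℝ) ^ k) • (x * w) := odd_comm hw hx
      rw [← mul_assoc, hcomm, smul_mul_assoc, smul_smul, ← pow_add]
      have hone : ((-1 : ℝ)) ^ (k + k) = 1 := by
        rw [← two_mul, pow_mul]; norm_num
      rw [hone, one_smul, mul_assoc]
  · intro x x' ihx ihx'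
    simp only [add_mul, map_add, mul_add, ihx, ihx']
    abel

variable {n : ℕ} (b : Module.Basis (Fin n) ℝ V)

omit hc1 hc2 hc3 in
lemma sum_coord_smul_ι (v : V) : ∑ i : Fin n, (b.coord i v) • ιV (b i) = ιV v := by
  conv_rhs => rw [← b.sum_repr v]
  rw [map_sum]
  exact Finset.sum_congr rfl (fun i _ => by rw [Module.Basis.coord_apply, map_smul])

/-- Euler identity, homogeneous version -/
lemma euler {k : ℕ} {x : E} (hx : x ∈ piece V k) :
    ∑ i : Fin n, ιV (b i) * c (b.coord i) x = (k : ℝ) • x := by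
  rw [piece] at hx
  induction hx using Submodule.pow_induction_on_left' with
  | algebraMap r =>
      have : ∀ i : Fin n, c (b.coord i) ((algebraMap ℝ E) r) = 0 := fun i =>
        c_piece_zero c hc1 hc2 hc3 _ (by
          rw [piece, pow_zero]; exact Submodule.algebraMap_mem r)
      simp [this]
  | add x y i hx hy ihx ihy =>
      simp only [map_add, mul_add, Finset.sum_add_distrib, ihx, ihy, smul_add]
  | mem_mul m hm i z hz ih =>
      obtain ⟨v, rfl⟩ := hm
      have step : ∀ j : Fin n, ιV (b j) * c (b.coord j) (ιV v * z)
          = (b.coord j v) • (ιV (b j) * z) + ιV v * (ιV (b j) * c (b.coord j) z) := by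
        intro j
        rw [hc3 _ 1 (ιV v) z (ι_mem_piece_one v), hc2, mul_add]
        congr 1
        · rw [← mul_assoc]
          rw [← Algebra.commutes (b.coord j v) (ιV (b j)), ← Algebra.smul_def,
            smul_mul_assoc]
        · rw [mul_smul_comm, pow_one, neg_one_smul, ← mul_assoc, ← mul_assoc]
          have hswap : ιV (b j) * ιV v = -(ιV v * ιV (b j)) :=
            eq_neg_of_add_eq_zero_left (ExteriorAlgebra.ι_add_mul_swap (R := ℝ) (b j) v)
          rw [hswap]
          rw [neg_mul, neg_neg]
      calc ∑ j : Fin n, ιV (b j) * c (b.coord j) (ιV v * z)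
          = (∑ j : Fin n, (b.coord j v) • (ιV (b j) * z))
            + ∑ j : Fin n, ιV v * (ιV (b j) * c (b.coord j) z) := by
            rw [← Finset.sum_add_distrib]
            exact Finset.sum_congr rfl (fun j _ => step j)
        _ = ιV v * z + ιV v * ((i : ℝ) • z) := by
            congr 1
            · rw [← sum_coord_smul_ι b v, Finset.sum_mul]
              exact Finset.sum_congr rfl (fun j _ => (smul_mul_assoc _ _ _).symm)
            · rw [← Finset.mul_sum, ih]
        _ = ((i + 1 : ℕ) : ℝ) • (ιV v * z) := by
            rw [mul_smul_comm]
            push_cast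
            rw [add_smul, one_smul]
            abel

/-- Euler identity, global version -/
lemma euler' (x : E) :
    ∑ i : Fin n, ιV (b i) * c (b.coord i) x = scaleOp (fun k => (k : ℝ)) x := by
  refine scaleOp_homog (p := fun x =>
    ∑ i : Fin n, ιV (b i) * c (b.coord i) x = scaleOp (fun k => (k : ℝ)) x) x ?_ ?_ ?_
  · simp
  · intro k x hx
    rw [euler c hc1 hc2 hc3 b hx, scaleOp_of_mem _ hx]
  · intro x x' ihx ihx'
    simp only [map_add, mul_add, Finset.sum_add_distrib, ihx, ihx']

include b in
/-- a homogeneous element of non-top degree annihilating `V` on the right is zero -/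
lemma homog_ann {k : ℕ} {x : E} (hx : x ∈ piece V k)
    (hann : ∀ v : V, x * ιV v = 0) (hk : k ≠ n) : x = 0 := by
  have hla : ∀ v : V, ιV v * x = 0 := by
    intro v
    rw [comm_ι hx v, hann v, smul_zero]
  have hself : ∀ j : Fin n, x = ιV (b j) * c (b.coord j) x := by
    intro j
    have h0 := congrArg (c (b.coord j)) (hla (b j))
    rw [hc3 _ 1 (ιV (b j)) x (ι_mem_piece_one (b j)), hc2, map_zero] at h0
    have hc : (b.coord j) (b j) = 1 := by simp
    rw [hc, map_one, one_mul, pow_one, neg_one_smul, ← sub_eq_add_neg] at h0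
    exact (eq_of_sub_eq_zero h0).symm.symm
  have hsum : (n : ℝ) • x = (k : ℝ) • x := by
    have h1 : ∑ _j : Fin n, x = (n : ℝ) • x := by
      rw [Finset.sum_const, Finset.card_univ, Fintype.card_fin]
      rw [← Nat.cast_smul_eq_nsmul (R := ℝ)]
    rw [← h1, ← euler c hc1 hc2 hc3 b hx]
    exact Finset.sum_congr rfl (fun j _ => hself j)
  have h2 : ((n : ℝ) - (k : ℝ)) • x = 0 := by
    rw [sub_smul, hsum, sub_self]
  rcases smul_eq_zero.mp h2 with h | h
  · have hnk : (n : ℝ) = (k : ℝ) := sub_eq_zero.mp h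
    have : n = k := by exact_mod_cast hnk
    exact absurd this.symm hk
  · exact h

end WithC

lemma piece_eq_bot {n : ℕ} [FiniteDimensional ℝ V] (b : Module.Basis (Fin n) ℝ V)
    {k : ℕ} (hk : n < k) : piece V k = ⊥ := by
  rw [piece_eq, ← ExteriorAlgebra.ιMulti_span_fixedDegree, Submodule.span_eq_bot]
  rintro x ⟨v, rfl⟩
  refine AlternatingMap.map_linearDependent _ v (fun hli => ?_)
  have hcard := hli.fintype_card_le_finrank
  rw [Fintype.card_fin, Module.finrank_eq_card_basis b, Fintype.card_fin] at hcard
  omega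

lemma scaleOp_mul_ι (f g : ℕ → ℝ) (hfg : ∀ k, g (k + 1) = f k) (y : E) (v : V) :
    scaleOp f y * ιV v = scaleOp g (y * ιV v) := by
  refine scaleOp_homog (p := fun y => scaleOp f y * ιV v = scaleOp g (y * ιV v)) y ?_ ?_ ?_
  · simp
  · intro k x hx
    rw [scaleOp_of_mem f hx, scaleOp_of_mem g (mul_mem_piece hx (ι_mem_piece_one v)),
      smul_mul_assoc, hfg k]
  · intro x x' ih ih'
    rw [map_add, add_mul, ih, ih', add_mul, map_add]

lemma decompose_mul_ι (x : E) (v : V) (k : ℕ) :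
    (DirectSum.decompose (fun k => piece V k) (x * ιV v) (k + 1) : E)
      = (DirectSum.decompose (fun k => piece V k) x k : E) * ιV v := by
  refine scaleOp_homog (p := fun x =>
    (DirectSum.decompose (fun k => piece V k) (x * ιV v) (k + 1) : E)
      = (DirectSum.decompose (fun k => piece V k) x k : E) * ιV v) x ?_ ?_ ?_
  · simp
  · intro j y hy
    by_cases hjk : j = k
    · subst hjk
      rw [DirectSum.decompose_of_mem_same _ hy,
        DirectSum.decompose_of_mem_same _ (mul_mem_piece hy (ι_mem_piece_one v))]
    · rw [DirectSum.decompose_of_mem_ne _ hy hjk,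
        DirectSum.decompose_of_mem_ne _ (mul_mem_piece hy (ι_mem_piece_one v))
          (by omega), zero_mul]
  · intro y z ihy ihz
    rw [add_mul, DirectSum.decompose_add, DirectSum.decompose_add, DirectSum.add_apply,
      DirectSum.add_apply, Submodule.coe_add, Submodule.coe_add, add_mul, ihy, ihz]

lemma deriv_one_aux {D : E →ₗ[ℝ] E} (hD : ∀ a b : E, D (a * b) = D a * b + a * D b) :
    D 1 = 0 := by
  have := hD 1 1
  simp only [one_mul, mul_one] at this
  exact (left_eq_add.mp this)

lemma deriv_ext {D₁ D₂ : E →ₗ[ℝ] E}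
    (h₁ : ∀ a b : E, D₁ (a * b) = D₁ a * b + a * D₁ b)
    (h₂ : ∀ a b : E, D₂ (a * b) = D₂ a * b + a * D₂ b)
    (hgen : ∀ v : V, D₁ (ιV v) = D₂ (ιV v)) : ∀ x, D₁ x = D₂ x := by
  intro x
  induction x using ExteriorAlgebra.induction with
  | algebraMap r =>
      rw [Algebra.algebraMap_eq_smul_one, map_smul, map_smul, deriv_one_aux h₁, deriv_one_aux h₂]
  | ι v => exact hgen v
  | mul a b iha ihb => rw [h₁, h₂, iha, ihb]
  | add a b iha ihb => rw [map_add, map_add, iha, ihb]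

end Aux

set_option maxHeartbeats 2000000 in
/-- every derivation `D` of `ΛV` (with `V` of dimension `n`, basis `v₁,…,vₙ`,
dual basis `v₁*,…,vₙ*`) is of the form
`D x = Σ_μ F(v_μ) ∧ ι_{v_μ*}(x) + ½(η ∧ x − x ∧ η)` for a unique linear `F : V → Λ₋V`
and some `η ∈ Λ₋V` unique up to adding an element of `Λ₋V ∩ ΛⁿV`.  Here `c α` is the
contraction by `α`, characterized by the stated axioms. -/
theorem stmt7 (n : ℕ) (V : Type*) [AddCommGroup V] [Module ℝ V] [FiniteDimensional ℝ V]
    (b : Module.Basis (Fin n) ℝ V)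
    (c : Module.Dual ℝ V → ExteriorAlgebra ℝ V →ₗ[ℝ] ExteriorAlgebra ℝ V)
    (hc1 : ∀ α, c α 1 = 0)
    (hc2 : ∀ α (v : V), c α (ExteriorAlgebra.ι ℝ v) = algebraMap ℝ _ (α v))
    (hc3 : ∀ α (k : ℕ) (x y : ExteriorAlgebra ℝ V), x ∈ piece V k →
      c α (x * y) = c α x * y + ((-1 : ℝ) ^ k) • (x * c α y))
    (D : ExteriorAlgebra ℝ V →ₗ[ℝ] ExteriorAlgebra ℝ V)
    (hD : ∀ a b : ExteriorAlgebra ℝ V, D (a * b) = D a * b + a * D b) :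
    ∃ (F : V →ₗ[ℝ] ExteriorAlgebra ℝ V) (η : ExteriorAlgebra ℝ V),
      (∀ v : V, F v ∈ oddPart V) ∧ η ∈ oddPart V ∧
      (∀ x : ExteriorAlgebra ℝ V,
        D x = (∑ μ : Fin n, F (b μ) * c (b.coord μ) x) + (1 / 2 : ℝ) • (η * x - x * η)) ∧
      (∀ (F' : V →ₗ[ℝ] ExteriorAlgebra ℝ V) (η' : ExteriorAlgebra ℝ V),
        (∀ v : V, F' v ∈ oddPart V) → η' ∈ oddPart V →
        (∀ x : ExteriorAlgebra ℝ V,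
          D x = (∑ μ : Fin n, F' (b μ) * c (b.coord μ) x) + (1 / 2 : ℝ) • (η' * x - x * η')) →
        F' = F ∧ η' - η ∈ oddPart V ⊓ piece V n) := by
  classical
  set F : V →ₗ[ℝ] ExteriorAlgebra ℝ V := oddPr ∘ₗ (D ∘ₗ ExteriorAlgebra.ι ℝ) with hFdef
  set G : V →ₗ[ℝ] ExteriorAlgebra ℝ V := evPr ∘ₗ (D ∘ₗ ExteriorAlgebra.ι ℝ) with hGdef
  have hF : ∀ v, F v ∈ oddPart V := fun v => oddPr_mem _
  have hG : ∀ v, G v ∈ evenPart V := fun v => evPr_mem _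
  have hFG : ∀ v, F v + G v = D ((ExteriorAlgebra.ι ℝ) v) := fun v => oddPr_add_evPr _
  have e1 : ∀ (u : V) (z : ExteriorAlgebra ℝ V), z ∈ oddPart V →
      (ExteriorAlgebra.ι ℝ) u * z = -(z * (ExteriorAlgebra.ι ℝ) u) := by
    intro u z hz
    have h := odd_comm hz (ι_mem_piece_one u)
    rw [pow_one, neg_one_smul] at h
    rw [h, neg_neg]
  have e2 : ∀ (u : V) (z : ExteriorAlgebra ℝ V), z ∈ evenPart V →
      (ExteriorAlgebra.ι ℝ) u * z = z * (ExteriorAlgebra.ι ℝ) u := fun u z hz => (even_comm hz (ι_mem_piece_one u)).symm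
  have hsumF : ∀ (L : V →ₗ[ℝ] ExteriorAlgebra ℝ V) (v : V),
      ∑ i : Fin n, (b.coord i v) • L (b i) = L v := by
    intro L v
    have h : ∑ i : Fin n, (b.coord i v) • L (b i) = ∑ i : Fin n, L ((b.repr v i) • b i) := by
      refine Finset.sum_congr rfl fun i _ => ?_
      rw [map_smul, Module.Basis.coord_apply]
    rw [h, ← map_sum, b.sum_repr]
  -- polarization identity for the even part
  have hG1 : ∀ v w : V, G v * (ExteriorAlgebra.ι ℝ) w + G w * (ExteriorAlgebra.ι ℝ) v = 0 := by
    intro v w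
    have h0 : D ((ExteriorAlgebra.ι ℝ) v) * (ExteriorAlgebra.ι ℝ) w + (ExteriorAlgebra.ι ℝ) v * D ((ExteriorAlgebra.ι ℝ) w)
        + (D ((ExteriorAlgebra.ι ℝ) w) * (ExteriorAlgebra.ι ℝ) v + (ExteriorAlgebra.ι ℝ) w * D ((ExteriorAlgebra.ι ℝ) v)) = 0 := by
      rw [← hD, ← hD, ← map_add, ExteriorAlgebra.ι_add_mul_swap, map_zero]
    rw [← hFG v, ← hFG w] at h0
    rw [add_mul, add_mul, mul_add, mul_add] at h0
    rw [e1 w (F v) (hF v), e1 v (F w) (hF w), e2 w (G v) (hG v), e2 v (G w) (hG w)] at h0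
    have h1 : G v * (ExteriorAlgebra.ι ℝ) w + G w * (ExteriorAlgebra.ι ℝ) v + (G v * (ExteriorAlgebra.ι ℝ) w + G w * (ExteriorAlgebra.ι ℝ) v) = 0 := by
      rw [← h0]; abel
    have h2 : (2 : ℝ) • (G v * (ExteriorAlgebra.ι ℝ) w + G w * (ExteriorAlgebra.ι ℝ) v) = 0 := by
      rw [two_smul]; exact h1
    simpa using (smul_eq_zero.mp h2).resolve_left (by norm_num)
  set S : ExteriorAlgebra ℝ V := ∑ i : Fin n, c (b.coord i) (G (b i)) with hSdef
  have hSodd : S ∈ oddPart V :=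
    Submodule.sum_mem _ fun i _ => c_even_mem_odd c hc1 hc2 hc3 _ (hG (b i))
  set t : ℕ → ℝ := fun k => if k = n then 0 else ((k : ℝ) - (n : ℝ))⁻¹ with htdef
  set η : ExteriorAlgebra ℝ V := scaleOp t S with hηdef
  have hηodd : η ∈ oddPart V := scaleOp_mem_odd t hSodd
  -- the key identity S * ι v = N (G v) - (n+1) • G v
  have hstar : ∀ v : V, S * (ExteriorAlgebra.ι ℝ) v
      = scaleOp (fun k => (k : ℝ)) (G v) - ((n : ℝ) + 1) • G v := by
    intro v
    have hterm : ∀ i : Fin n, c (b.coord i) (G (b i)) * (ExteriorAlgebra.ι ℝ) v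
        = c (b.coord i) (G (b i) * (ExteriorAlgebra.ι ℝ) v) - (b.coord i v) • G (b i) := by
      intro i
      rw [c_even_leibniz c hc1 hc2 hc3 _ (hG (b i)) ((ExteriorAlgebra.ι ℝ) v), hc2,
        ← Algebra.commutes ((b.coord i) v) (G (b i)), ← Algebra.smul_def]
      abel
    have hstep2 : ∀ i : Fin n, c (b.coord i) (G (b i) * (ExteriorAlgebra.ι ℝ) v)
        = -(c (b.coord i) (G v * (ExteriorAlgebra.ι ℝ) (b i))) := by
      intro i
      rw [eq_neg_of_add_eq_zero_left (hG1 (b i) v), map_neg]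
    have hstep3 : ∀ i : Fin n, c (b.coord i) (G v * (ExteriorAlgebra.ι ℝ) (b i))
        = c (b.coord i) (G v) * (ExteriorAlgebra.ι ℝ) (b i) + G v := by
      intro i
      rw [c_even_leibniz c hc1 hc2 hc3 _ (hG v) ((ExteriorAlgebra.ι ℝ) (b i)), hc2]
      have h1 : (b.coord i) (b i) = 1 := by simp
      rw [h1, map_one, mul_one]
    have hstep4 : ∀ i : Fin n, c (b.coord i) (G v) * (ExteriorAlgebra.ι ℝ) (b i)
        = -((ExteriorAlgebra.ι ℝ) (b i) * c (b.coord i) (G v)) := by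
      intro i
      rw [e1 (b i) (c (b.coord i) (G v)) (c_even_mem_odd c hc1 hc2 hc3 _ (hG v)), neg_neg]
    calc S * (ExteriorAlgebra.ι ℝ) v = ∑ i : Fin n, c (b.coord i) (G (b i)) * (ExteriorAlgebra.ι ℝ) v := by
          rw [hSdef, Finset.sum_mul]
      _ = ∑ i : Fin n, (-(c (b.coord i) (G v * (ExteriorAlgebra.ι ℝ) (b i))) - (b.coord i v) • G (b i)) := by
          refine Finset.sum_congr rfl fun i _ => ?_
          rw [hterm i, hstep2 i]
      _ = (∑ i : Fin n, -(c (b.coord i) (G v * (ExteriorAlgebra.ι ℝ) (b i))))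
            - ∑ i : Fin n, (b.coord i v) • G (b i) := by
          rw [Finset.sum_sub_distrib]
      _ = (∑ i : Fin n, ((ExteriorAlgebra.ι ℝ) (b i) * c (b.coord i) (G v) - G v)) - G v := by
          rw [hsumF G v]
          congr 1
          refine Finset.sum_congr rfl fun i _ => ?_
          rw [hstep3 i, hstep4 i]
          abel
      _ = scaleOp (fun k => (k : ℝ)) (G v) - (n : ℝ) • G v - G v := by
          rw [Finset.sum_sub_distrib, euler' c hc1 hc2 hc3 b (G v), Finset.sum_const,
            Finset.card_univ, Fintype.card_fin, ← Nat.cast_smul_eq_nsmul (R := ℝ)]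
      _ = scaleOp (fun k => (k : ℝ)) (G v) - ((n : ℝ) + 1) • G v := by
          rw [add_smul, one_smul]
          abel
  have hpiece_bot : piece V (n + 1) = ⊥ := piece_eq_bot b (by omega)
  -- η * ι v = G v
  have hηv : ∀ v : V, η * (ExteriorAlgebra.ι ℝ) v = G v := by
    intro v
    have hshift : ∀ k,
        (fun k => if k = n + 1 then (0:ℝ) else ((k : ℝ) - 1 - (n : ℝ))⁻¹) (k + 1) = t k := by
      intro k
      by_cases h : k = n
      · simp [htdef, h]
      · have h2 : ¬(k + 1 = n + 1) := by omega
        simp only [htdef, if_neg h, if_neg h2]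
        congr 1
        push_cast
        ring
    have hM : scaleOp (fun k => (k : ℝ)) (G v) - ((n : ℝ) + 1) • (G v)
        = scaleOp (fun k => (k : ℝ) - ((n : ℝ) + 1)) (G v) := by
      refine scaleOp_homog (p := fun x => scaleOp (fun k => (k : ℝ)) x - ((n : ℝ) + 1) • x
          = scaleOp (fun k => (k : ℝ) - ((n : ℝ) + 1)) x) (G v) ?_ ?_ ?_
      · simp
      · intro k y hy
        rw [scaleOp_of_mem _ hy, scaleOp_of_mem _ hy, ← sub_smul]
      · intro y z ihy ihz
        rw [map_add, map_add, smul_add, ← ihy, ← ihz]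
        abel
    rw [hηdef, scaleOp_mul_ι t (fun k => if k = n + 1 then (0:ℝ) else ((k : ℝ) - 1 - (n : ℝ))⁻¹) hshift S v, hstar v, hM, scaleOp_scaleOp]
    refine scaleOp_homog (p := fun x => scaleOp
        (fun k => (if k = n + 1 then (0:ℝ) else ((k : ℝ) - 1 - (n : ℝ))⁻¹)
          * ((k : ℝ) - ((n : ℝ) + 1))) x = x) (G v) (by simp) ?_
      (fun y z ihy ihz => by beta_reduce at ihy ihz ⊢; rw [map_add, ihy, ihz])
    intro k y hy
    by_cases h : k = n + 1
    · subst h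
      have hy0 : y = 0 := by rw [hpiece_bot] at hy; simpa using hy
      rw [hy0, map_zero]
    · rw [scaleOp_of_mem _ hy, if_neg h]
      have hne : ((k : ℝ) - 1 - (n : ℝ)) ≠ 0 := by
        have hkk : (k : ℕ) ≠ n + 1 := h
        intro hz
        apply hkk
        have : (k : ℝ) = (n : ℝ) + 1 := by linarith
        exact_mod_cast this
      have hone : ((k : ℝ) - 1 - (n : ℝ))⁻¹ * ((k : ℝ) - ((n : ℝ) + 1)) = 1 := by
        rw [show (k : ℝ) - ((n : ℝ) + 1) = (k : ℝ) - 1 - (n : ℝ) from by ring,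
          inv_mul_cancel₀ hne]
      rw [hone, one_smul]
  -- half-commutator on generators
  have hhalf : ∀ (z : ExteriorAlgebra ℝ V), z ∈ oddPart V → ∀ v : V,
      (1 / 2 : ℝ) • (z * (ExteriorAlgebra.ι ℝ) v - (ExteriorAlgebra.ι ℝ) v * z) = z * (ExteriorAlgebra.ι ℝ) v := by
    intro z hz v
    rw [e1 v z hz, sub_neg_eq_add, ← two_smul ℝ (z * (ExteriorAlgebra.ι ℝ) v), smul_smul]
    norm_num
  -- value of the candidate formula on generators
  have hgenval : ∀ (F₀ : V →ₗ[ℝ] ExteriorAlgebra ℝ V) (η₀ : ExteriorAlgebra ℝ V),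
      η₀ ∈ oddPart V → ∀ v : V,
      (∑ μ : Fin n, F₀ (b μ) * c (b.coord μ) ((ExteriorAlgebra.ι ℝ) v))
        + (1 / 2 : ℝ) • (η₀ * (ExteriorAlgebra.ι ℝ) v - (ExteriorAlgebra.ι ℝ) v * η₀) = F₀ v + η₀ * (ExteriorAlgebra.ι ℝ) v := by
    intro F₀ η₀ hη₀ v
    rw [hhalf η₀ hη₀ v]
    congr 1
    calc ∑ μ : Fin n, F₀ (b μ) * c (b.coord μ) ((ExteriorAlgebra.ι ℝ) v)
        = ∑ μ : Fin n, (b.coord μ v) • F₀ (b μ) := by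
          refine Finset.sum_congr rfl fun μ _ => ?_
          rw [hc2, ← Algebra.commutes ((b.coord μ) v) (F₀ (b μ)), ← Algebra.smul_def]
      _ = F₀ v := hsumF F₀ v
  -- the main formula
  have hkey : ∀ x : ExteriorAlgebra ℝ V,
      D x = (∑ μ : Fin n, F (b μ) * c (b.coord μ) x) + (1 / 2 : ℝ) • (η * x - x * η) := by
    set Φ : ExteriorAlgebra ℝ V →ₗ[ℝ] ExteriorAlgebra ℝ V :=
      (∑ μ : Fin n, (LinearMap.mulLeft ℝ (F (b μ))) ∘ₗ (c (b.coord μ)))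
        + (1 / 2 : ℝ) • ((LinearMap.mulLeft ℝ η) - (LinearMap.mulRight ℝ η)) with hΦdef
    have hΦapp : ∀ x, Φ x = (∑ μ : Fin n, F (b μ) * c (b.coord μ) x)
        + (1 / 2 : ℝ) • (η * x - x * η) := by
      intro x
      rw [hΦdef]
      simp only [LinearMap.add_apply, LinearMap.coe_sum, Finset.sum_apply,
        LinearMap.comp_apply, LinearMap.smul_apply, LinearMap.sub_apply,
        LinearMap.mulLeft_apply, LinearMap.mulRight_apply]
    have hΦleib : ∀ a b' : ExteriorAlgebra ℝ V, Φ (a * b') = Φ a * b' + a * Φ b' := by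
      intro a b'
      rw [hΦapp, hΦapp, hΦapp]
      have hterm : ∑ μ : Fin n, F (b μ) * c (b.coord μ) (a * b')
          = (∑ μ : Fin n, F (b μ) * c (b.coord μ) a) * b'
            + a * ∑ μ : Fin n, F (b μ) * c (b.coord μ) b' := by
        rw [Finset.sum_mul, Finset.mul_sum, ← Finset.sum_add_distrib]
        exact Finset.sum_congr rfl fun μ _ =>
          odd_mul_c_leibniz c hc1 hc2 hc3 _ (hF (b μ)) a b'
      have hcm : (1 / 2 : ℝ) • (η * (a * b') - (a * b') * η)
          = ((1 / 2 : ℝ) • (η * a - a * η)) * b' + a * ((1 / 2 : ℝ) • (η * b' - b' * η)) := by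
        rw [smul_mul_assoc, mul_smul_comm, ← smul_add]
        congr 1
        noncomm_ring
      rw [hterm, hcm, add_mul, mul_add]
      abel
    have hgen : ∀ v : V, D ((ExteriorAlgebra.ι ℝ) v) = Φ ((ExteriorAlgebra.ι ℝ) v) := by
      intro v
      rw [hΦapp, hgenval F η hηodd v, hηv v, hFG v]
    intro x
    rw [deriv_ext hD hΦleib hgen x, hΦapp]
  refine ⟨F, η, hF, hηodd, hkey, ?_⟩
  -- uniqueness
  intro F' η' hF' hη' hkey'
  have hvv : ∀ v : V, F' v + η' * (ExteriorAlgebra.ι ℝ) v = F v + η * (ExteriorAlgebra.ι ℝ) v := by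
    intro v
    have h1 := hkey' ((ExteriorAlgebra.ι ℝ) v)
    have h2 := hkey ((ExteriorAlgebra.ι ℝ) v)
    rw [hgenval F' η' hη' v] at h1
    rw [hgenval F η hηodd v] at h2
    rw [← h1, ← h2]
  have hFF : ∀ v, F' v = F v := by
    intro v
    have h : oddPr (F' v + η' * (ExteriorAlgebra.ι ℝ) v) = oddPr (F v + η * (ExteriorAlgebra.ι ℝ) v) := by rw [hvv v]
    rw [map_add, map_add, oddPr_of_odd (hF' v), oddPr_of_odd (hF v),
      oddPr_of_even (odd_mul_ι_mem_even hη' v), oddPr_of_even (odd_mul_ι_mem_even hηodd v),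
      add_zero, add_zero] at h
    exact h
  refine ⟨LinearMap.ext hFF, ?_⟩
  have hδann : ∀ v : V, (η' - η) * (ExteriorAlgebra.ι ℝ) v = 0 := by
    intro v
    have h := hvv v
    rw [hFF v] at h
    have h2 : η' * (ExteriorAlgebra.ι ℝ) v = η * (ExteriorAlgebra.ι ℝ) v := add_left_cancel h
    rw [sub_mul, h2, sub_self]
  have hδodd : η' - η ∈ oddPart V := sub_mem hη' hηodd
  have hcomp : ∀ k : ℕ, k ≠ n →
      (DirectSum.decompose (fun k => piece V k) (η' - η) k : ExteriorAlgebra ℝ V) = 0 := by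
    intro k hk
    refine homog_ann c hc1 hc2 hc3 b (SetLike.coe_mem _) (fun v => ?_) hk
    rw [← decompose_mul_ι (η' - η) v k, hδann v]
    simp
  have hδtop : (η' - η) ∈ piece V n := by
    have hsum := DirectSum.sum_support_decompose (fun k => piece V k) (η' - η)
    rw [← hsum]
    refine Submodule.sum_mem _ fun i hi => ?_
    by_cases h : i = n
    · subst h; exact SetLike.coe_mem _
    · rw [hcomp i h]; exact Submodule.zero_mem _
  exact Submodule.mem_inf.mpr ⟨hδodd, hδtop⟩
end

section
/- Let n be a natural number, let W be a finite-dimensional real vector space, let P = MvPolynomial (Fin n) ℝ be the polynomial algebra in variables X₁, …, Xₙ, let F : (Fin n → ℝ) → W be an injective linear map, and write Fμ = F(e_μ) for the standard basis vectors e_μ. Define d_F = Σ_{μ=1}^{n} (∂/∂X_μ) ⊗ (x ↦ ι(Fμ) ∧ x) on P ⊗ ΛW. Then for every k ≥ 1, every element x of P_k ⊗ ΛW (where P_k ⊆ P is the subspace of homogeneous polynomials of total degree k) with d_F(x) = 0 lies in the image of d_F; that is, there exists y ∈ P ⊗ ΛW with x = d_F(y). -/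
open scoped TensorProduct

namespace Stmt19Aux

open ExteriorAlgebra MvPolynomial

set_option maxHeartbeats 1000000
set_option synthInstance.maxHeartbeats 200000

variable {n : ℕ} {W : Type*} [AddCommGroup W] [Module ℝ W]

/-- contraction by the `μ`-th dual functional -/
noncomputable def auxC (G : W →ₗ[ℝ] (Fin n → ℝ)) (μ : Fin n) :
    ExteriorAlgebra ℝ W →ₗ[ℝ] ExteriorAlgebra ℝ W :=
  CliffordAlgebra.contractLeft ((LinearMap.proj μ).comp G)

/-- left multiplication by `ι (F eμ)` -/
noncomputable def auxL (F : (Fin n → ℝ) →ₗ[ℝ] W) (μ : Fin n) :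
    ExteriorAlgebra ℝ W →ₗ[ℝ] ExteriorAlgebra ℝ W :=
  LinearMap.mulLeft ℝ (ι ℝ (F (Pi.single μ 1)))

noncomputable def auxN (F : (Fin n → ℝ) →ₗ[ℝ] W) (G : W →ₗ[ℝ] (Fin n → ℝ)) :
    ExteriorAlgebra ℝ W →ₗ[ℝ] ExteriorAlgebra ℝ W :=
  ∑ μ : Fin n, (auxL F μ).comp (auxC G μ)

lemma auxC_ι_mul (G : W →ₗ[ℝ] (Fin n → ℝ)) (μ : Fin n) (v : W) (y : ExteriorAlgebra ℝ W) :
    auxC G μ (ι ℝ v * y) = G v μ • y - ι ℝ v * auxC G μ y :=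
  CliffordAlgebra.contractLeft_ι_mul ((LinearMap.proj μ).comp G) v y

lemma auxC_one (G : W →ₗ[ℝ] (Fin n → ℝ)) (μ : Fin n) :
    auxC G μ (1 : ExteriorAlgebra ℝ W) = 0 :=
  CliffordAlgebra.contractLeft_one _ _

lemma auxN_apply (F : (Fin n → ℝ) →ₗ[ℝ] W) (G : W →ₗ[ℝ] (Fin n → ℝ)) (x : ExteriorAlgebra ℝ W) :
    auxN F G x = ∑ μ : Fin n, ι ℝ (F (Pi.single μ 1)) * auxC G μ x := by
  simp [auxN, auxL]

lemma auxN_one (F : (Fin n → ℝ) →ₗ[ℝ] W) (G : W →ₗ[ℝ] (Fin n → ℝ)) :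
    auxN F G (1 : ExteriorAlgebra ℝ W) = 0 := by
  simp [auxN_apply, auxC_one]

lemma sum_single_smul (F : (Fin n → ℝ) →ₗ[ℝ] W) (c : Fin n → ℝ) :
    ∑ μ : Fin n, c μ • F (Pi.single μ 1) = F c := by
  simp_rw [← map_smul, ← map_sum]
  congr 1
  simp_rw [← Pi.single_smul, smul_eq_mul, mul_one]
  exact Finset.univ_sum_single c

lemma auxN_ι_mul (F : (Fin n → ℝ) →ₗ[ℝ] W) (G : W →ₗ[ℝ] (Fin n → ℝ)) (v : W)
    (y : ExteriorAlgebra ℝ W) :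
    auxN F G (ι ℝ v * y) = ι ℝ (F (G v)) * y + ι ℝ v * auxN F G y := by
  rw [auxN_apply]
  have h1 : ∀ μ : Fin n, ι ℝ (F (Pi.single μ 1)) * auxC G μ (ι ℝ v * y)
      = G v μ • (ι ℝ (F (Pi.single μ 1)) * y)
        + ι ℝ v * (ι ℝ (F (Pi.single μ 1)) * auxC G μ y) := by
    intro μ
    have hsw : ι ℝ (F (Pi.single μ 1)) * ι ℝ v = - (ι ℝ v * ι ℝ (F (Pi.single μ 1))) := by
      have := ι_add_mul_swap (R := ℝ) (F (Pi.single μ 1)) v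
      linear_combination (norm := noncomm_ring) this
    rw [auxC_ι_mul, mul_sub, mul_smul_comm, ← mul_assoc, hsw, neg_mul, sub_neg_eq_add, mul_assoc]
  rw [Finset.sum_congr rfl fun μ _ => h1 μ, Finset.sum_add_distrib]
  congr 1
  · rw [← sum_single_smul F (G v), map_sum, Finset.sum_mul]
    simp_rw [map_smul, smul_mul_assoc]
  · rw [← Finset.mul_sum, auxN_apply]

lemma auxN_ι (F : (Fin n → ℝ) →ₗ[ℝ] W) (G : W →ₗ[ℝ] (Fin n → ℝ)) (v : W) :
    auxN F G (ι ℝ v) = ι ℝ (F (G v)) := by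
  have h := auxN_ι_mul F G v 1
  simpa [auxN_one] using h

lemma eigen_span (F : (Fin n → ℝ) →ₗ[ℝ] W) (G : W →ₗ[ℝ] (Fin n → ℝ))
    (hGF : G.comp F = LinearMap.id) (x : ExteriorAlgebra ℝ W) :
    x ∈ Submodule.span ℝ {w : ExteriorAlgebra ℝ W | ∃ a : ℕ, auxN F G w = (a : ℝ) • w} := by
  have hGF' : ∀ c, G (F c) = c := fun c => congrFun (congrArg DFunLike.coe hGF) c
  set S := Submodule.span ℝ {w : ExteriorAlgebra ℝ W | ∃ a : ℕ, auxN F G w = (a : ℝ) • w} with hS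
  have hgen : ∀ w, (∃ a : ℕ, auxN F G w = (a : ℝ) • w) → w ∈ S :=
    fun w hw => Submodule.subset_span hw
  have heig0 : ∀ u : W, G u = 0 → ∀ (a : ℕ) (y : ExteriorAlgebra ℝ W),
      auxN F G y = (a : ℝ) • y → auxN F G (ι ℝ u * y) = (a : ℝ) • (ι ℝ u * y) := by
    intro u hu a y hy
    rw [auxN_ι_mul, hu, map_zero, map_zero, zero_mul, zero_add, hy, mul_smul_comm]
  have heig1 : ∀ u : W, F (G u) = u → ∀ (a : ℕ) (y : ExteriorAlgebra ℝ W),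
      auxN F G y = (a : ℝ) • y → auxN F G (ι ℝ u * y) = ((a + 1 : ℕ) : ℝ) • (ι ℝ u * y) := by
    intro u hu a y hy
    rw [auxN_ι_mul, hu, hy, mul_smul_comm]
    push_cast
    rw [add_smul, one_smul, add_comm]
  have hstab : ∀ v : W, ∀ y ∈ S, ι ℝ v * y ∈ S := by
    intro v y hy
    induction hy using Submodule.span_induction with
    | mem w hw =>
      obtain ⟨a, ha⟩ := hw
      have hdecomp : ι ℝ v * w = ι ℝ (F (G v)) * w + ι ℝ (v - F (G v)) * w := by
        rw [map_sub, sub_mul]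
        abel
      rw [hdecomp]
      refine add_mem (hgen _ ⟨a + 1, heig1 _ ?_ a w ha⟩) (hgen _ ⟨a, heig0 _ ?_ a w ha⟩)
      · rw [hGF']
      · rw [map_sub, hGF', sub_self]
    | zero => rw [mul_zero]; exact zero_mem S
    | add y z _ _ hy hz => rw [mul_add]; exact add_mem hy hz
    | smul r y _ hy => rw [mul_smul_comm]; exact Submodule.smul_mem S r hy
  suffices h : x ∈ S ∧ ∀ y ∈ S, x * y ∈ S from h.1
  induction x using CliffordAlgebra.induction with
  | algebraMap r =>
    have h1 : (1 : ExteriorAlgebra ℝ W) ∈ S := hgen 1 ⟨0, by simp [auxN_one]⟩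
    refine ⟨?_, fun y hy => ?_⟩
    · rw [Algebra.algebraMap_eq_smul_one]
      exact Submodule.smul_mem S r h1
    · rw [← Algebra.smul_def]
      exact Submodule.smul_mem S r hy
  | ι v =>
    refine ⟨?_, hstab v⟩
    have hdec : ι ℝ v = ι ℝ (F (G v)) + ι ℝ (v - F (G v)) := by
      rw [map_sub]; abel
    rw [hdec]
    refine add_mem (hgen _ ⟨1, ?_⟩) (hgen _ ⟨0, ?_⟩)
    · rw [auxN_ι, hGF']
      norm_num
    · rw [auxN_ι, map_sub, hGF', sub_self, map_zero, map_zero]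
      norm_num
  | mul a b ha hb => exact ⟨ha.2 b hb.1, fun y hy => by rw [mul_assoc]; exact ha.2 _ (hb.2 y hy)⟩
  | add a b ha hb =>
    exact ⟨add_mem ha.1 hb.1, fun y hy => by rw [add_mul]; exact add_mem (ha.2 y hy) (hb.2 y hy)⟩

section TensorLevel

noncomputable def auxE (n : ℕ) : MvPolynomial (Fin n) ℝ →ₗ[ℝ] MvPolynomial (Fin n) ℝ :=
  ∑ μ : Fin n, (LinearMap.mulLeft ℝ (X μ)).comp (pderiv μ).toLinearMap

lemma auxE_monomial (d : Fin n →₀ ℕ) (c : ℝ) :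
    auxE n (monomial d c) = (d.degree : ℝ) • monomial d c := by
  classical
  have hterm : ∀ μ : Fin n,
      X μ * pderiv μ (monomial d c) = (d μ : ℝ) • monomial d c := by
    intro μ
    rw [pderiv_monomial]
    by_cases h : d μ = 0
    · simp [h]
    · have hd : Finsupp.single μ 1 + (d - Finsupp.single μ 1) = d := by
        ext ν
        by_cases hν : ν = μ
        · subst hν
          simp only [Finsupp.add_apply, Finsupp.single_eq_same, Finsupp.tsub_apply]
          omega
        · simp [Finsupp.single_apply, Ne.symm hν]
      have hX : (X μ : MvPolynomial (Fin n) ℝ) = monomial (Finsupp.single μ 1) 1 := rfl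
      rw [hX, monomial_mul, one_mul, hd, smul_monomial, smul_eq_mul, mul_comm]
  have : auxE n (monomial d c) = ∑ μ : Fin n, X μ * pderiv μ (monomial d c) := by
    simp [auxE]
  rw [this, Finset.sum_congr rfl fun μ _ => hterm μ, ← Finset.sum_smul]
  congr 1
  have : (d.degree : ℝ) = ∑ μ ∈ d.support, (d μ : ℝ) := by
    rw [Finsupp.degree]
    push_cast
    exact Nat.cast_sum _ _
  rw [this]
  exact (Finset.sum_subset (Finset.subset_univ _)
    (fun μ _ hμ => by simp [Finsupp.notMem_support_iff.mp hμ])).symm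

lemma euler {k : ℕ} (p : MvPolynomial (Fin n) ℝ)
    (hp : p ∈ homogeneousSubmodule (Fin n) ℝ k) : auxE n p = (k : ℝ) • p := by
  conv_lhs => rw [p.as_sum]
  rw [map_sum]
  rw [Finset.sum_congr rfl fun d hd => auxE_monomial d (coeff d p)]
  have hdeg : ∀ d ∈ p.support, (d.degree : ℝ) = (k : ℝ) := by
    intro d hd
    have := (mem_homogeneousSubmodule k p).mp hp (mem_support_iff.mp hd)
    rw [Finsupp.degree_eq_weight_one]
    exact_mod_cast congrArg Nat.cast this
  rw [Finset.sum_congr rfl fun d hd => by rw [hdeg d hd]]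
  rw [← Finset.smul_sum, ← p.as_sum]

variable (n) in
noncomputable def auxD (F : (Fin n → ℝ) →ₗ[ℝ] W) :
    (MvPolynomial (Fin n) ℝ ⊗[ℝ] ExteriorAlgebra ℝ W) →ₗ[ℝ]
      (MvPolynomial (Fin n) ℝ ⊗[ℝ] ExteriorAlgebra ℝ W) :=
  ∑ μ : Fin n, TensorProduct.map (pderiv μ).toLinearMap (auxL F μ)

variable (n) in
noncomputable def auxh (G : W →ₗ[ℝ] (Fin n → ℝ)) :
    (MvPolynomial (Fin n) ℝ ⊗[ℝ] ExteriorAlgebra ℝ W) →ₗ[ℝ]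
      (MvPolynomial (Fin n) ℝ ⊗[ℝ] ExteriorAlgebra ℝ W) :=
  ∑ μ : Fin n, TensorProduct.map (LinearMap.mulLeft ℝ (X μ)) (auxC G μ)

variable (n) in
noncomputable def auxM (F : (Fin n → ℝ) →ₗ[ℝ] W) (G : W →ₗ[ℝ] (Fin n → ℝ)) :
    (MvPolynomial (Fin n) ℝ ⊗[ℝ] ExteriorAlgebra ℝ W) →ₗ[ℝ]
      (MvPolynomial (Fin n) ℝ ⊗[ℝ] ExteriorAlgebra ℝ W) :=
  TensorProduct.map LinearMap.id (auxN F G)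

variable (n) in
noncomputable def auxMs (F : (Fin n → ℝ) →ₗ[ℝ] W) (G : W →ₗ[ℝ] (Fin n → ℝ)) (a : ℝ) :
    (MvPolynomial (Fin n) ℝ ⊗[ℝ] ExteriorAlgebra ℝ W) →ₗ[ℝ]
      (MvPolynomial (Fin n) ℝ ⊗[ℝ] ExteriorAlgebra ℝ W) :=
  auxM n F G - a • LinearMap.id

lemma auxMs_apply (F : (Fin n → ℝ) →ₗ[ℝ] W) (G : W →ₗ[ℝ] (Fin n → ℝ)) (a : ℝ)
    (z : MvPolynomial (Fin n) ℝ ⊗[ℝ] ExteriorAlgebra ℝ W) :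
    auxMs n F G a z = auxM n F G z - a • z := rfl

lemma auxD_tmul (F : (Fin n → ℝ) →ₗ[ℝ] W) (p : MvPolynomial (Fin n) ℝ)
    (w : ExteriorAlgebra ℝ W) :
    auxD n F (p ⊗ₜ w) = ∑ ν : Fin n, (pderiv ν p) ⊗ₜ (ι ℝ (F (Pi.single ν 1)) * w) := by
  simp [auxD, auxL, LinearMap.sum_apply]

lemma auxh_tmul (G : W →ₗ[ℝ] (Fin n → ℝ)) (p : MvPolynomial (Fin n) ℝ)
    (w : ExteriorAlgebra ℝ W) :
    auxh n G (p ⊗ₜ w) = ∑ μ : Fin n, (X μ * p) ⊗ₜ (auxC G μ w) := by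
  simp [auxh, LinearMap.sum_apply]

lemma auxM_tmul (F : (Fin n → ℝ) →ₗ[ℝ] W) (G : W →ₗ[ℝ] (Fin n → ℝ))
    (p : MvPolynomial (Fin n) ℝ) (w : ExteriorAlgebra ℝ W) :
    auxM n F G (p ⊗ₜ w) = p ⊗ₜ (auxN F G w) := by
  simp [auxM]

lemma comm_pt (F : (Fin n → ℝ) →ₗ[ℝ] W) (G : W →ₗ[ℝ] (Fin n → ℝ))
    (hGF : G.comp F = LinearMap.id)
    (z : MvPolynomial (Fin n) ℝ ⊗[ℝ] ExteriorAlgebra ℝ W) :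
    auxM n F G (auxD n F z) = auxD n F (auxM n F G z) + auxD n F z := by
  have hGF' : ∀ c, G (F c) = c := fun c => congrFun (congrArg DFunLike.coe hGF) c
  have hop : (auxM n F G).comp (auxD n F)
      = (auxD n F).comp (auxM n F G) + auxD n F := by
    apply TensorProduct.ext'
    intro p w
    simp only [LinearMap.comp_apply, LinearMap.add_apply]
    rw [auxM_tmul, auxD_tmul, auxD_tmul, map_sum]
    have hterm : ∀ ν : Fin n, auxM n F G ((pderiv ν p) ⊗ₜ (ι ℝ (F (Pi.single ν 1)) * w))
        = (pderiv ν p) ⊗ₜ (ι ℝ (F (Pi.single ν 1)) * w)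
          + (pderiv ν p) ⊗ₜ (ι ℝ (F (Pi.single ν 1)) * auxN F G w) := by
      intro ν
      rw [auxM_tmul, auxN_ι_mul, hGF', TensorProduct.tmul_add]
    rw [Finset.sum_congr rfl fun ν _ => hterm ν, Finset.sum_add_distrib]
    exact add_comm _ _
  exact congrFun (congrArg DFunLike.coe hop) z

lemma homotopy_pt (F : (Fin n → ℝ) →ₗ[ℝ] W) (G : W →ₗ[ℝ] (Fin n → ℝ))
    (hGF : G.comp F = LinearMap.id)
    (z : MvPolynomial (Fin n) ℝ ⊗[ℝ] ExteriorAlgebra ℝ W) :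
    auxD n F (auxh n G z) + auxh n G (auxD n F z)
      = TensorProduct.map (auxE n) LinearMap.id z + auxM n F G z := by
  classical
  have hGF' : ∀ c, G (F c) = c := fun c => congrFun (congrArg DFunLike.coe hGF) c
  have hop : (auxD n F).comp (auxh n G) + (auxh n G).comp (auxD n F)
      = TensorProduct.map (auxE n) LinearMap.id + auxM n F G := by
    apply TensorProduct.ext'
    intro p w
    simp only [LinearMap.comp_apply, LinearMap.add_apply]
    have key : ∀ ν μ : Fin n,
        (pderiv ν (X μ * p)) ⊗ₜ[ℝ] (ι ℝ (F (Pi.single ν 1)) * auxC G μ w)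
          + (X μ * pderiv ν p) ⊗ₜ[ℝ] (auxC G μ (ι ℝ (F (Pi.single ν 1)) * w))
        = (if ν = μ then p ⊗ₜ[ℝ] (ι ℝ (F (Pi.single μ 1)) * auxC G μ w) else 0)
          + (if ν = μ then (X ν * pderiv ν p) ⊗ₜ[ℝ] w else 0) := by
      intro ν μ
      rw [pderiv_mul, auxC_ι_mul, hGF']
      by_cases h : ν = μ
      · subst h
        rw [pderiv_X_self, one_mul, Pi.single_eq_same, one_smul, if_pos rfl, if_pos rfl,
          TensorProduct.add_tmul, TensorProduct.tmul_sub]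
        abel
      · rw [pderiv_X_of_ne (Ne.symm h), zero_mul, zero_add,
          Pi.single_eq_of_ne (Ne.symm h), zero_smul, zero_sub, TensorProduct.tmul_neg,
          if_neg h, if_neg h, add_zero, add_neg_cancel]
    rw [auxh_tmul, auxD_tmul, map_sum, map_sum]
    have h1 : ∀ μ : Fin n, auxD n F ((X μ * p) ⊗ₜ[ℝ] (auxC G μ w))
        = ∑ ν : Fin n, (pderiv ν (X μ * p)) ⊗ₜ (ι ℝ (F (Pi.single ν 1)) * auxC G μ w) :=
      fun μ => auxD_tmul F _ _
    have h2 : ∀ ν : Fin n, auxh n G ((pderiv ν p) ⊗ₜ[ℝ] (ι ℝ (F (Pi.single ν 1)) * w))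
        = ∑ μ : Fin n, (X μ * pderiv ν p) ⊗ₜ (auxC G μ (ι ℝ (F (Pi.single ν 1)) * w)) :=
      fun ν => auxh_tmul G _ _
    rw [Finset.sum_congr rfl fun μ _ => h1 μ, Finset.sum_congr rfl fun ν _ => h2 ν,
      Finset.sum_comm, ← Finset.sum_add_distrib]
    simp_rw [← Finset.sum_add_distrib]
    rw [Finset.sum_congr rfl fun ν _ => Finset.sum_congr rfl fun μ _ => key ν μ]
    simp_rw [Finset.sum_add_distrib, Finset.sum_ite_eq, Finset.mem_univ, if_true]
    rw [TensorProduct.map_tmul, auxM_tmul, auxN_apply, TensorProduct.tmul_sum]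
    have hE : auxE n p = ∑ ν : Fin n, X ν * pderiv ν p := by simp [auxE]
    rw [hE, TensorProduct.sum_tmul]
    simp only [LinearMap.id_coe, id_eq]
    exact add_comm _ _
  exact congrFun (congrArg DFunLike.coe hop) z

variable (n) in
noncomputable def killp (F : (Fin n → ℝ) →ₗ[ℝ] W) (G : W →ₗ[ℝ] (Fin n → ℝ)) :
    ℕ → ((MvPolynomial (Fin n) ℝ ⊗[ℝ] ExteriorAlgebra ℝ W) →ₗ[ℝ]
      (MvPolynomial (Fin n) ℝ ⊗[ℝ] ExteriorAlgebra ℝ W))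
  | 0 => LinearMap.id
  | (m + 1) => (killp F G m).comp (auxMs n F G (m : ℝ))

lemma killp_sub_comm (F : (Fin n → ℝ) →ₗ[ℝ] W) (G : W →ₗ[ℝ] (Fin n → ℝ)) (a b : ℝ) :
    (auxMs n F G a).comp (auxMs n F G b)
      = (auxMs n F G b).comp (auxMs n F G a) := by
  apply LinearMap.ext
  intro z
  simp only [LinearMap.comp_apply, auxMs_apply, map_sub, map_smul]
  module

lemma killp_comm (F : (Fin n → ℝ) →ₗ[ℝ] W) (G : W →ₗ[ℝ] (Fin n → ℝ)) (m : ℕ) (a : ℝ) :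
    (killp n F G m).comp (auxMs n F G a)
      = (auxMs n F G a).comp (killp n F G m) := by
  induction m with
  | zero => rw [show killp n F G 0 = LinearMap.id from rfl, LinearMap.id_comp, LinearMap.comp_id]
  | succ m ih =>
    rw [show killp n F G (m + 1)
        = (killp n F G m).comp (auxMs n F G (m : ℝ)) from rfl,
      LinearMap.comp_assoc, killp_sub_comm, ← LinearMap.comp_assoc, ih, LinearMap.comp_assoc]

lemma killp_succ_zero (F : (Fin n → ℝ) →ₗ[ℝ] W) (G : W →ₗ[ℝ] (Fin n → ℝ)) (m : ℕ)
    (x : MvPolynomial (Fin n) ℝ ⊗[ℝ] ExteriorAlgebra ℝ W) (h : killp n F G m x = 0) :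
    killp n F G (m + 1) x = 0 := by
  have : killp n F G (m + 1) x
      = (auxMs n F G (m : ℝ)) (killp n F G m x) := by
    rw [show killp n F G (m + 1)
        = (killp n F G m).comp (auxMs n F G (m : ℝ)) from rfl,
      killp_comm, LinearMap.comp_apply]
  rw [this, h, map_zero]

lemma killp_mono (F : (Fin n → ℝ) →ₗ[ℝ] W) (G : W →ₗ[ℝ] (Fin n → ℝ)) {m m' : ℕ} (h : m ≤ m')
    (x : MvPolynomial (Fin n) ℝ ⊗[ℝ] ExteriorAlgebra ℝ W) (hx : killp n F G m x = 0) :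
    killp n F G m' x = 0 := by
  induction h with
  | refl => exact hx
  | step _ ih => exact killp_succ_zero F G _ x ih

lemma kill_exists (F : (Fin n → ℝ) →ₗ[ℝ] W) (G : W →ₗ[ℝ] (Fin n → ℝ))
    (hGF : G.comp F = LinearMap.id) (z : MvPolynomial (Fin n) ℝ ⊗[ℝ] ExteriorAlgebra ℝ W) :
    ∃ m, killp n F G m z = 0 := by
  induction z with
  | zero => exact ⟨0, map_zero _⟩
  | add a b ha hb =>
    obtain ⟨m1, h1⟩ := ha
    obtain ⟨m2, h2⟩ := hb
    exact ⟨max m1 m2, by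
      rw [map_add, killp_mono F G (le_max_left m1 m2) a h1,
        killp_mono F G (le_max_right m1 m2) b h2, add_zero]⟩
  | tmul p w =>
    have hw := eigen_span F G hGF w
    induction hw using Submodule.span_induction with
    | mem u hu =>
      obtain ⟨a, ha⟩ := hu
      refine ⟨a + 1, ?_⟩
      have h0 : (auxMs n F G (a : ℝ)) (p ⊗ₜ u) = 0 := by
        rw [auxMs_apply, auxM_tmul, ha, TensorProduct.tmul_smul, sub_self]
      rw [show killp n F G (a + 1)
          = (killp n F G a).comp (auxMs n F G (a : ℝ)) from rfl,
        LinearMap.comp_apply, h0, map_zero]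
    | zero => exact ⟨0, by rw [TensorProduct.tmul_zero, map_zero]⟩
    | add u v _ _ hu hv =>
      obtain ⟨m1, h1⟩ := hu
      obtain ⟨m2, h2⟩ := hv
      exact ⟨max m1 m2, by
        rw [TensorProduct.tmul_add, map_add, killp_mono F G (le_max_left m1 m2) _ h1,
          killp_mono F G (le_max_right m1 m2) _ h2, add_zero]⟩
    | smul r u _ hu =>
      obtain ⟨m, hm⟩ := hu
      exact ⟨m, by rw [TensorProduct.tmul_smul, map_smul, hm, smul_zero]⟩

lemma main_ind (F : (Fin n → ℝ) →ₗ[ℝ] W) (G : W →ₗ[ℝ] (Fin n → ℝ))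
    (hGF : G.comp F = LinearMap.id) {k : ℕ} (hk : 1 ≤ k) :
    ∀ (m : ℕ) (x : MvPolynomial (Fin n) ℝ ⊗[ℝ] ExteriorAlgebra ℝ W),
      x ∈ LinearMap.range (TensorProduct.map (homogeneousSubmodule (Fin n) ℝ k).subtype
        (LinearMap.id : ExteriorAlgebra ℝ W →ₗ[ℝ] ExteriorAlgebra ℝ W)) →
      auxD n F x = 0 → killp n F G m x = 0 → x ∈ LinearMap.range (auxD n F) := by
  have hE : ∀ x ∈ LinearMap.range (TensorProduct.map (homogeneousSubmodule (Fin n) ℝ k).subtype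
      (LinearMap.id : ExteriorAlgebra ℝ W →ₗ[ℝ] ExteriorAlgebra ℝ W)),
      TensorProduct.map (auxE n) LinearMap.id x = (k : ℝ) • x := by
    rintro _ ⟨u, rfl⟩
    rw [← LinearMap.comp_apply, ← TensorProduct.map_comp, LinearMap.id_comp]
    have hcomp : (auxE n).comp (homogeneousSubmodule (Fin n) ℝ k).subtype
        = (k : ℝ) • (homogeneousSubmodule (Fin n) ℝ k).subtype := by
      apply LinearMap.ext
      intro q
      rw [LinearMap.comp_apply, LinearMap.smul_apply, Submodule.subtype_apply]
      exact euler q.1 q.2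
    rw [hcomp, TensorProduct.map_smul_left, LinearMap.smul_apply]
  have hM : ∀ x ∈ LinearMap.range (TensorProduct.map (homogeneousSubmodule (Fin n) ℝ k).subtype
      (LinearMap.id : ExteriorAlgebra ℝ W →ₗ[ℝ] ExteriorAlgebra ℝ W)),
      auxM n F G x ∈ LinearMap.range (TensorProduct.map (homogeneousSubmodule (Fin n) ℝ k).subtype
        (LinearMap.id : ExteriorAlgebra ℝ W →ₗ[ℝ] ExteriorAlgebra ℝ W)) := by
    rintro _ ⟨u, rfl⟩
    refine ⟨TensorProduct.map LinearMap.id (auxN F G) u, ?_⟩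
    have hcomp : (TensorProduct.map (homogeneousSubmodule (Fin n) ℝ k).subtype
          (LinearMap.id : ExteriorAlgebra ℝ W →ₗ[ℝ] ExteriorAlgebra ℝ W)).comp
          (TensorProduct.map LinearMap.id (auxN F G))
        = (auxM n F G).comp (TensorProduct.map (homogeneousSubmodule (Fin n) ℝ k).subtype
          LinearMap.id) := by
      unfold auxM
      rw [← TensorProduct.map_comp, ← TensorProduct.map_comp, LinearMap.id_comp,
        LinearMap.comp_id, LinearMap.id_comp, LinearMap.comp_id]
    exact congrFun (congrArg DFunLike.coe hcomp) u
  intro m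
  induction m with
  | zero =>
    intro x _ _ hkill
    have : x = 0 := hkill
    rw [this]
    exact Submodule.zero_mem _
  | succ m ih =>
    intro x hx hclosed hkill
    set x' := auxM n F G x - (m : ℝ) • x with hx'def
    have hx'mem : x' ∈ LinearMap.range (TensorProduct.map
        (homogeneousSubmodule (Fin n) ℝ k).subtype
        (LinearMap.id : ExteriorAlgebra ℝ W →ₗ[ℝ] ExteriorAlgebra ℝ W)) :=
      Submodule.sub_mem _ (hM x hx) (Submodule.smul_mem _ _ hx)
    have hx'closed : auxD n F x' = 0 := by
      have h2 := comm_pt F G hGF x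
      rw [hclosed, map_zero, add_zero] at h2
      rw [hx'def, map_sub, map_smul, hclosed, smul_zero, sub_zero, ← h2]
    have hx'kill : killp n F G m x' = 0 := by
      have heq : x' = (auxMs n F G (m : ℝ)) x := by
        rw [auxMs_apply]
      rw [show killp n F G (m + 1)
          = (killp n F G m).comp (auxMs n F G (m : ℝ)) from rfl,
        LinearMap.comp_apply] at hkill
      rw [heq]
      exact hkill
    have hx'range := ih x' hx'mem hx'closed hx'kill
    have hrange1 : (k : ℝ) • x + auxM n F G x ∈ LinearMap.range (auxD n F) := by
      have h := homotopy_pt F G hGF x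
      rw [hclosed, map_zero, add_zero] at h
      exact ⟨auxh n G x, by rw [h, hE x hx]⟩
    have hrange2 : ((k : ℝ) + m) • x ∈ LinearMap.range (auxD n F) := by
      have heq : ((k : ℝ) + m) • x = ((k : ℝ) • x + auxM n F G x) - x' := by
        rw [hx'def]
        module
      rw [heq]
      exact Submodule.sub_mem _ hrange1 hx'range
    have hkm : ((k : ℝ) + m) ≠ 0 := by
      have h1 : (1 : ℝ) ≤ (k : ℝ) := by exact_mod_cast hk
      positivity
    have heq2 : x = ((k : ℝ) + m)⁻¹ • (((k : ℝ) + m) • x) := by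
      rw [smul_smul, inv_mul_cancel₀ hkm, one_smul]
    rw [heq2]
    exact Submodule.smul_mem _ _ hrange2

end TensorLevel

end Stmt19Aux

theorem stmt19 (n : ℕ) (W : Type*) [AddCommGroup W] [Module ℝ W] [FiniteDimensional ℝ W]
    (F : (Fin n → ℝ) →ₗ[ℝ] W) (hF : Function.Injective F)
    (dF : (MvPolynomial (Fin n) ℝ ⊗[ℝ] ExteriorAlgebra ℝ W) →ₗ[ℝ]
          (MvPolynomial (Fin n) ℝ ⊗[ℝ] ExteriorAlgebra ℝ W))
    (hdF : dF = ∑ μ : Fin n,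
      TensorProduct.map (MvPolynomial.pderiv μ).toLinearMap
        (LinearMap.mulLeft ℝ (ExteriorAlgebra.ι ℝ (F (Pi.single μ 1)))))
    (k : ℕ) (hk : 1 ≤ k)
    (x : MvPolynomial (Fin n) ℝ ⊗[ℝ] ExteriorAlgebra ℝ W)
    (hx : x ∈ LinearMap.range (TensorProduct.map
      (MvPolynomial.homogeneousSubmodule (Fin n) ℝ k).subtype
      (LinearMap.id : ExteriorAlgebra ℝ W →ₗ[ℝ] ExteriorAlgebra ℝ W)))
    (hclosed : dF x = 0) :
    ∃ y : MvPolynomial (Fin n) ℝ ⊗[ℝ] ExteriorAlgebra ℝ W, dF y = x := by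
  classical
  obtain ⟨G, hGF⟩ := F.exists_leftInverse_of_injective (LinearMap.ker_eq_bot.mpr hF)
  have hD : dF = Stmt19Aux.auxD n F := by rw [hdF]; rfl
  obtain ⟨m, hm⟩ := Stmt19Aux.kill_exists F G hGF x
  have hmem := Stmt19Aux.main_ind F G hGF hk m x hx (by rw [← hD]; exact hclosed) hm
  obtain ⟨y, hy⟩ := hmem
  exact ⟨y, by rw [hD]; exact hy⟩
end
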